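/- Suppose p* is a probability distribution on A maximizing p ↦ det V(p) over all probability distributions on A, and suppose V(p*) is positive definite. Then for every a ∈ A, (φ_a − μ(p*))^⊤ V(p*)^{-1} (φ_a − μ(p*)) ≤ d. -/

import Mathlib

open Matrix Finset

/-- Mean feature vector `μ(p) = ∑_a p_a φ_a`. -/
noncomputable def featMean {A : Type*} [Fintype A] {d : ℕ} (φ : A → Fin d → ℝ)
    (p : A → ℝ) : Fin d → ℝ :=
  ∑ a, p a • φ a

/-- Centered feature covariance matrix `V(p) = ∑_a p_a φ̄_a φ̄_a^⊤`, where
`φ̄_a = φ_a − μ(p)`. -/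
noncomputable def covMat {A : Type*} [Fintype A] {d : ℕ} (φ : A → Fin d → ℝ)
    (p : A → ℝ) : Matrix (Fin d) (Fin d) ℝ :=
  ∑ a, p a • Matrix.vecMulVec (φ a - featMean φ p) (φ a - featMean φ p)



lemma mul_vecMulVec' {n : Type*} [Fintype n] (M : Matrix n n ℝ) (u w : n → ℝ) :
    M * vecMulVec u w = vecMulVec (M *ᵥ u) w := by
  ext i j
  simp [mul_apply, vecMulVec, mulVec, dotProduct, Finset.sum_mul, mul_assoc]

lemma det_add_vecMulVec {n : Type*} [Fintype n] [DecidableEq n]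
    (V : Matrix n n ℝ) (hV : IsUnit V.det) (u w : n → ℝ) :
    (V + vecMulVec u w).det = V.det * (1 + w ⬝ᵥ (V⁻¹ *ᵥ u)) := by
  have h1 : V + vecMulVec u w = V * (1 + vecMulVec (V⁻¹ *ᵥ u) w) := by
    rw [Matrix.mul_add, Matrix.mul_one, mul_vecMulVec', mulVec_mulVec,
      Matrix.mul_nonsing_inv V hV, one_mulVec]
  rw [h1, det_mul, vecMulVec_eq Unit, det_one_add_replicateCol_mul_replicateRow]

lemma featMean_apply {A : Type*} [Fintype A] {d : ℕ} (φ : A → Fin d → ℝ)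
    (p : A → ℝ) (i : Fin d) : featMean φ p i = ∑ a, p a * φ a i := by
  simp [featMean, Finset.sum_apply]

lemma covMat_apply {A : Type*} [Fintype A] {d : ℕ} (φ : A → Fin d → ℝ)
    (p : A → ℝ) (i j : Fin d) :
    covMat φ p i j = ∑ a, p a * ((φ a i - featMean φ p i) * (φ a j - featMean φ p j)) := by
  simp [covMat, vecMulVec, Matrix.sum_apply, mul_assoc]

lemma centered_zero {A : Type*} [Fintype A] {d : ℕ} (φ : A → Fin d → ℝ)
    (p : A → ℝ) (hp1 : ∑ a, p a = 1) (i : Fin d) :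
    ∑ a, p a * (φ a i - featMean φ p i) = 0 := by
  have h : ∑ a, p a * (φ a i - featMean φ p i)
      = (∑ a, p a * φ a i) - (∑ a, p a) * featMean φ p i := by
    rw [Finset.sum_mul, ← Finset.sum_sub_distrib]
    exact Finset.sum_congr rfl fun a _ => by ring
  rw [h, hp1, one_mul, featMean_apply, sub_self]

lemma covMat_perturb {A : Type*} [Fintype A] [DecidableEq A] {d : ℕ} (φ : A → Fin d → ℝ)
    (p : A → ℝ) (hp1 : ∑ a, p a = 1) (a : A) (t : ℝ) :
    covMat φ (fun a' => (1 - t) * p a' + t * (if a' = a then 1 else 0)) =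
      (1 - t) • covMat φ p +
        (t * (1 - t)) • vecMulVec (φ a - featMean φ p) (φ a - featMean φ p) := by
  have hmean : ∀ i, featMean φ (fun a' => (1 - t) * p a' + t * (if a' = a then 1 else 0)) i =
      (1 - t) * featMean φ p i + t * φ a i := by
    intro i
    rw [featMean_apply, featMean_apply]
    have h1 : ∀ a' ∈ Finset.univ, ((1 - t) * p a' + t * (if a' = a then 1 else 0)) * φ a' i
        = (1 - t) * (p a' * φ a' i) + (if a' = a then t * φ a i else 0) := by
      intro a' _
      by_cases h : a' = a
      · subst h; rw [if_pos rfl, if_pos rfl]; ring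
      · rw [if_neg h, if_neg h]; ring
    rw [Finset.sum_congr rfl h1, Finset.sum_add_distrib, Finset.sum_ite_eq' Finset.univ a,
      if_pos (Finset.mem_univ a), ← Finset.mul_sum]
  ext i j
  simp only [Matrix.add_apply, Matrix.smul_apply, vecMulVec, Matrix.of_apply, Pi.sub_apply,
    smul_eq_mul, covMat_apply, hmean]
  set μi := featMean φ p i
  set μj := featMean φ p j
  have key : ∀ a' ∈ Finset.univ, ((1 - t) * p a' + t * (if a' = a then 1 else 0)) *
      ((φ a' i - ((1 - t) * μi + t * φ a i)) * (φ a' j - ((1 - t) * μj + t * φ a j)))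
      = (1 - t) * (p a' * ((φ a' i - μi) * (φ a' j - μj)))
        + (-((1 - t) * t * (φ a j - μj))) * (p a' * (φ a' i - μi))
        + (-((1 - t) * t * (φ a i - μi))) * (p a' * (φ a' j - μj))
        + ((1 - t) * t ^ 2 * (φ a i - μi) * (φ a j - μj)) * p a'
        + (if a' = a then t * (1 - t) ^ 2 * ((φ a i - μi) * (φ a j - μj)) else 0) := by
    intro a' _
    by_cases h : a' = a
    · subst h; rw [if_pos rfl, if_pos rfl]; ring
    · rw [if_neg h, if_neg h]; ring
  rw [Finset.sum_congr rfl key]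
  rw [Finset.sum_add_distrib, Finset.sum_add_distrib, Finset.sum_add_distrib,
    Finset.sum_add_distrib, ← Finset.mul_sum, ← Finset.mul_sum, ← Finset.mul_sum,
    ← Finset.mul_sum, centered_zero φ p hp1 i, centered_zero φ p hp1 j, hp1,
    Finset.sum_ite_eq' Finset.univ a]
  rw [if_pos (Finset.mem_univ a)]
  ring

/-- Kiefer–Wolfowitz-type leverage bound from the proof of Lemma 8.
If `p*` maximizes `p ↦ det V(p)` over probability distributions on `A` and `V(p*)` is
positive definite, then for every `a ∈ A`,
`(φ_a − μ(p*))^⊤ V(p*)⁻¹ (φ_a − μ(p*)) ≤ d`. -/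
theorem optimal_design_leverage_bound
    {A : Type*} [Fintype A] [Nonempty A] {d : ℕ} (hd : 1 ≤ d)
    (φ : A → Fin d → ℝ) (pstar : A → ℝ)
    (hps : ∀ a, 0 ≤ pstar a) (hps1 : ∑ a, pstar a = 1)
    (hmax : ∀ p : A → ℝ, (∀ a, 0 ≤ p a) → ∑ a, p a = 1 →
      (covMat φ p).det ≤ (covMat φ pstar).det)
    (hV : (covMat φ pstar).PosDef) :
    ∀ a : A, (φ a - featMean φ pstar) ⬝ᵥ ((covMat φ pstar)⁻¹ *ᵥ (φ a - featMean φ pstar))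
      ≤ (d : ℝ) := by
  classical
  intro a
  by_contra hc
  push_neg at hc
  set μ := featMean φ pstar with hμ
  set V := covMat φ pstar with hVdef
  set v : Fin d → ℝ := φ a - μ with hvdef
  set L : ℝ := v ⬝ᵥ (V⁻¹ *ᵥ v) with hLdef
  have hdpos : (0:ℝ) < d := by exact_mod_cast hd
  have hL0 : (0:ℝ) < L := lt_trans hdpos hc
  set t : ℝ := (L - d) / (2 * d * L) with htdef
  have ht0 : 0 < t := div_pos (by linarith) (by positivity)
  have ht1 : t < 1 := by
    rw [htdef, div_lt_one (by positivity)]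
    have hd1 : (1:ℝ) ≤ d := by exact_mod_cast hd
    nlinarith [mul_le_mul_of_nonneg_right hd1 hL0.le]
  set p : A → ℝ := fun a' => (1 - t) * pstar a' + t * (if a' = a then 1 else 0) with hpdef
  have hp0 : ∀ a', 0 ≤ p a' := by
    intro a'
    apply add_nonneg (mul_nonneg (by linarith) (hps a'))
    apply mul_nonneg ht0.le
    split <;> norm_num
  have hp1 : ∑ a', p a' = 1 := by
    rw [hpdef]
    rw [Finset.sum_add_distrib, ← Finset.mul_sum, hps1, ← Finset.mul_sum,
      Finset.sum_ite_eq' Finset.univ a, if_pos (Finset.mem_univ a)]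
    ring
  have hdet := hmax p hp0 hp1
  rw [hpdef, covMat_perturb φ pstar hps1 a t] at hdet
  have hfactor : (1 - t) • V + (t * (1 - t)) • vecMulVec v v
      = (1 - t) • (V + vecMulVec v (t • v)) := by
    rw [smul_add]
    congr 1
    ext i j
    simp [vecMulVec, smul_eq_mul]
    ring
  rw [← hvdef, ← hVdef, hfactor, Matrix.det_smul,
    det_add_vecMulVec V hV.det_pos.ne'.isUnit v (t • v)] at hdet
  have hdot : (t • v) ⬝ᵥ (V⁻¹ *ᵥ v) = t * L := by
    rw [smul_dotProduct, hLdef]; simp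
  rw [hdot] at hdet
  simp only [Fintype.card_fin] at hdet
  -- hdet : (1 - t) ^ d * (V.det * (1 + t * L)) ≤ V.det
  have hdV : 0 < V.det := hV.det_pos
  have hbern : 1 - (d : ℝ) * t ≤ (1 - t) ^ d := by
    have := one_add_mul_le_pow (a := -t) (by linarith) d
    have h2 : 1 + (d:ℝ) * (-t) = 1 - d * t := by ring
    rw [h2, ← sub_eq_add_neg] at this
    exact this
  have h1tL : (0:ℝ) ≤ 1 + t * L := by positivity
  have hdLt : (d:ℝ) * L * t = (L - d) / 2 := by
    rw [htdef]
    field_simp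
  have hgt1 : 1 < (1 - t) ^ d * (1 + t * L) := by
    have h3 : (1 - (d:ℝ) * t) * (1 + t * L) ≤ (1 - t) ^ d * (1 + t * L) :=
      mul_le_mul_of_nonneg_right hbern h1tL
    nlinarith [mul_pos ht0 (by linarith : (0:ℝ) < L - d)]
  nlinarith
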